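/- Let R be a commutative Bézout domain and let a, b ∈ R satisfy a·R + b·R = R. Then for every integer n > 0 the following are equivalent: (i) the 2×2 matrix with rows (a, b) and (0, 0) is a product of n idempotent matrices; (ii) there exist elements r₀, r₁, …, r_{2n−2} ∈ R such that the row vector (a, b) equals (1, 0) multiplied on the right by the product M(r_{2n−2})·M(r_{2n−3}) ⋯ M(r₀)·J, where M(r) is the 2×2 matrix with rows (r, 1) and (1, 0), and J is the 2×2 matrix with rows (0, −1) and (1, 0). -/

import Mathlib

/- Proof of the Cossu–Zanardo-type theorem relating idempotent factorizations of
`!![a, b; 0, 0]` over a Bézout domain to continued-fraction representations. -/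

open Matrix

namespace IdemCF

variable {R : Type*} [CommRing R]

/-- The 2×2 matrix with first row `(a, b)` and zero second row. -/
def Sm (a b : R) : Matrix (Fin 2) (Fin 2) R := !![a, b; 0, 0]

/-- The continued-fraction step matrix. -/
def Mw (q : R) : Matrix (Fin 2) (Fin 2) R := !![q, 1; 1, 0]

/-- The rotation matrix `J`. -/
def Jm : Matrix (Fin 2) (Fin 2) R := !![0, -1; 1, 0]

/-- Product of the `Mw`-word given by the list `l`. -/
def Pw (l : List R) : Matrix (Fin 2) (Fin 2) R := (l.map Mw).prod

lemma vecMul_pair (p q : R) (A : Matrix (Fin 2) (Fin 2) R) :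
    Matrix.vecMul ![p, q] A = ![p * A 0 0 + q * A 1 0, p * A 0 1 + q * A 1 1] := by
  funext j
  fin_cases j <;>
    simp [Matrix.vecMul, dotProduct, Fin.sum_univ_two]

lemma dot_pair (p q r s : R) : dotProduct ![p, q] ![r, s] = p * r + q * s := by
  simp [dotProduct, Fin.sum_univ_two]

lemma mulVec_pair (A : Matrix (Fin 2) (Fin 2) R) (c d : R) :
    A *ᵥ ![c, d] = ![A 0 0 * c + A 0 1 * d, A 1 0 * c + A 1 1 * d] := by
  funext i
  fin_cases i <;>
    simp [Matrix.mulVec, dotProduct, Fin.sum_univ_two]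

lemma isUnit_Mw (q : R) : IsUnit (Mw q) := by
  rw [Matrix.isUnit_iff_isUnit_det]
  have : (Mw q).det = -1 := by simp [Mw, Matrix.det_fin_two_of]
  rw [this]
  exact isUnit_one.neg

lemma isUnit_Jm : IsUnit (Jm : Matrix (Fin 2) (Fin 2) R) := by
  rw [Matrix.isUnit_iff_isUnit_det]
  have : (Jm : Matrix (Fin 2) (Fin 2) R).det = 1 := by simp [Jm, Matrix.det_fin_two_of]
  rw [this]; exact isUnit_one

lemma Pw_cons (q : R) (t : List R) : Pw (q :: t) = Mw q * Pw t := by simp [Pw]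

lemma isUnit_Pw (l : List R) : IsUnit (Pw l) := by
  induction l with
  | nil => simp [Pw]
  | cons q t ih =>
      rw [Pw_cons]
      exact (isUnit_Mw q).mul ih

lemma isUnit_PwJ (l : List R) : IsUnit (Pw l * Jm) := (isUnit_Pw l).mul isUnit_Jm

lemma Sm_mul (a b : R) (A : Matrix (Fin 2) (Fin 2) R) :
    Sm a b * A = Sm (a * A 0 0 + b * A 1 0) (a * A 0 1 + b * A 1 1) := by
  ext i j
  fin_cases i <;> fin_cases j <;>
    simp [Sm, Matrix.mul_apply, Fin.sum_univ_two]

omit [CommRing R] in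
lemma eq_pair_iff {v : Fin 2 → R} {x y : R} : v = ![x, y] ↔ v 0 = x ∧ v 1 = y := by
  constructor
  · rintro rfl; constructor <;> simp
  · rintro ⟨h0, h1⟩; funext j; fin_cases j <;> simpa

lemma vecMul_e0 (A : Matrix (Fin 2) (Fin 2) R) :
    Matrix.vecMul ![(1 : R), 0] A = ![A 0 0, A 0 1] := by
  funext j; fin_cases j <;> simp [vecMul_pair]

lemma Mw_mul_row (p q x : R) : Matrix.vecMul ![p, q] (Mw x) = ![p * x + q, p] := by
  funext j; fin_cases j <;> simp [vecMul_pair, Mw]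

/-- Key extension step: if `(a',b')` is represented by the word `l'` and `(a',b')`, `(a,b)`
share a column `(c,d)`, then `(a,b)` is represented by a word two letters longer. -/
lemma extend_word (a b a' b' c d : R) (l' : List R)
    (hl' : ![a', b'] = Matrix.vecMul ![1, 0] (Pw l' * Jm))
    (h1 : a' * c + b' * d = 1) (h2 : a * c + b * d = 1) :
    ∃ x y : R, ![a, b] = Matrix.vecMul ![1, 0] (Pw (x :: y :: l') * Jm) := by
  obtain ⟨u, hu⟩ := isUnit_PwJ (R := R) l'
  set U : Matrix (Fin 2) (Fin 2) R := Pw l' * Jm with hUdef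
  set V : Matrix (Fin 2) (Fin 2) R := (↑u⁻¹ : Matrix (Fin 2) (Fin 2) R) with hVdef
  have hVU : V * U = 1 := by rw [hVdef, ← hu]; exact u.inv_mul
  rw [vecMul_e0] at hl'
  have ha' : a' = U 0 0 := (eq_pair_iff.mp hl').1
  have hb' : b' = U 0 1 := (eq_pair_iff.mp hl').2
  set p : R := (Matrix.vecMul ![a, b] V) 0 with hp
  set s : R := (Matrix.vecMul ![a, b] V) 1 with hs
  have hps : Matrix.vecMul ![a, b] V = ![p, s] := eq_pair_iff.mpr ⟨rfl, rfl⟩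
  have habps : Matrix.vecMul ![p, s] U = ![a, b] := by
    rw [← hps, Matrix.vecMul_vecMul, hVU, Matrix.vecMul_one]
  set g : R := U 0 0 * c + U 0 1 * d with hg
  set h : R := U 1 0 * c + U 1 1 * d with hh
  have hgh : U *ᵥ ![c, d] = ![g, h] := by rw [mulVec_pair]
  have hg1 : g = 1 := by rw [hg, ← ha', ← hb']; exact h1
  have key : p * g + s * h = 1 := by
    have e1 : dotProduct ![p, s] (U *ᵥ ![c, d]) = 1 := by
      rw [dotProduct_mulVec, habps, dot_pair]; exact h2
    rw [hgh, dot_pair] at e1; exact e1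
  have hpval : p = 1 - s * h := by
    rw [hg1, mul_one] at key; rw [← key]; ring
  refine ⟨s, -h, ?_⟩
  have hmat : Pw (s :: -h :: l') * Jm = Mw s * (Mw (-h) * U) := by
    rw [Pw_cons, Pw_cons, hUdef, Matrix.mul_assoc, Matrix.mul_assoc]
  rw [hmat, ← Matrix.vecMul_vecMul, ← Matrix.vecMul_vecMul, Mw_mul_row]
  have step2 : Matrix.vecMul ![(1:R) * s + 0, 1] (Mw (-h)) = ![p, s] := by
    rw [Mw_mul_row, hpval, hh]
    apply eq_pair_iff.mpr
    constructor
    · show (1 * s + 0) * -(U 1 0 * c + U 1 1 * d) + 1 = 1 - s * (U 1 0 * c + U 1 1 * d)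
      ring
    · simp
  rw [step2, habps]

section Bezout
variable [IsDomain R] [IsBezout R]

lemma idem_split (E : Matrix (Fin 2) (Fin 2) R) (hE : E * E = E) :
    E = 0 ∨ E = 1 ∨ ∃ c₁ c₂ d₁ d₂ : R,
      E = !![c₁ * d₁, c₁ * d₂; c₂ * d₁, c₂ * d₂] ∧ d₁ * c₁ + d₂ * c₂ = 1 := by
  set x := E 0 0 with hx
  set y := E 0 1 with hy
  set z := E 1 0 with hz
  set w := E 1 1 with hw
  have hEeta : E = !![x, y; z, w] := by
    rw [hx, hy, hz, hw]; exact Matrix.eta_fin_two E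
  have hent : ∀ i j, (E * E) i j = E i j := fun i j => by rw [hE]
  have e1 : x * x + y * z = x := by
    have := hent 0 0; rw [Matrix.mul_apply, Fin.sum_univ_two] at this; exact this
  have e2 : x * y + y * w = y := by
    have := hent 0 1; rw [Matrix.mul_apply, Fin.sum_univ_two] at this; exact this
  have e3 : z * x + w * z = z := by
    have := hent 1 0; rw [Matrix.mul_apply, Fin.sum_univ_two] at this; exact this
  by_cases hy0 : y = 0
  · by_cases hz0 : z = 0
    · have hx2 : x * (x - 1) = 0 := by rw [hy0] at e1; linear_combination e1
      have hw2 : w * (w - 1) = 0 := by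
        have e4 : z * y + w * w = w := by
          have := hent 1 1; rw [Matrix.mul_apply, Fin.sum_univ_two] at this; exact this
        rw [hz0] at e4; linear_combination e4
      rcases mul_eq_zero.mp hx2 with hx0 | hx1
      · rcases mul_eq_zero.mp hw2 with hw0 | hw1
        · left
          rw [hEeta, hx0, hy0, hz0, hw0]
          ext i j; fin_cases i <;> fin_cases j <;> simp
        · have hw1 : w = 1 := by linear_combination hw1
          refine Or.inr (Or.inr ⟨0, 1, 0, 1, ?_, by ring⟩)
          rw [hEeta, hx0, hy0, hz0, hw1]
          congr 1 <;> norm_num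
      · have hx1 : x = 1 := by linear_combination hx1
        rcases mul_eq_zero.mp hw2 with hw0 | hw1
        · refine Or.inr (Or.inr ⟨1, 0, 1, 0, ?_, by ring⟩)
          rw [hEeta, hx1, hy0, hz0, hw0]
          congr 1 <;> norm_num
        · have hw1 : w = 1 := by linear_combination hw1
          right; left
          rw [hEeta, hx1, hy0, hz0, hw1]
          ext i j; fin_cases i <;> fin_cases j <;> simp [Matrix.one_apply]
    · have htr : x + w = 1 := by
        have h0 : z * (x + w - 1) = 0 := by linear_combination e3
        rcases mul_eq_zero.mp h0 with h | h
        · exact absurd h hz0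
        · linear_combination h
      have hxw : x * w = 0 := by
        rw [hy0] at e1
        have hw1 : w = 1 - x := by linear_combination htr
        rw [hw1]; linear_combination -e1
      rcases mul_eq_zero.mp hxw with hx0 | hw0
      · have hw1 : w = 1 := by rw [hx0] at htr; linear_combination htr
        refine Or.inr (Or.inr ⟨0, 1, z, 1, ?_, by ring⟩)
        rw [hEeta, hx0, hy0, hw1]
        congr 1 <;> norm_num
      · have hx1 : x = 1 := by rw [hw0] at htr; linear_combination htr
        refine Or.inr (Or.inr ⟨1, z, 1, 0, ?_, by ring⟩)
        rw [hEeta, hx1, hy0, hw0]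
        congr 1 <;> norm_num
  · have htr : x + w = 1 := by
      have h0 : y * (x + w - 1) = 0 := by linear_combination e2
      rcases mul_eq_zero.mp h0 with h | h
      · exact absurd h hy0
      · linear_combination h
    have hdet : y * z = x * w := by
      have hw1 : w = 1 - x := by linear_combination htr
      rw [hw1]; linear_combination e1
    have hprin : (Ideal.span {x, z} : Ideal R).IsPrincipal := IsBezout.span_pair_isPrincipal x z
    obtain ⟨g, hg⟩ := hprin
    have hxg : x ∈ Ideal.span ({x, z} : Set R) := Ideal.subset_span (by simp)
    have hzg : z ∈ Ideal.span ({x, z} : Set R) := Ideal.subset_span (by simp)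
    rw [hg] at hxg hzg
    obtain ⟨c₁, hc₁⟩ := Ideal.mem_span_singleton'.mp hxg
    obtain ⟨c₂, hc₂⟩ := Ideal.mem_span_singleton'.mp hzg
    have hgm : g ∈ Ideal.span ({x, z} : Set R) := by
      rw [hg]; exact Ideal.mem_span_singleton_self g
    obtain ⟨α, β, hab⟩ := Ideal.mem_span_pair.mp hgm
    by_cases hgz : g = 0
    · have hx0 : x = 0 := by rw [← hc₁, hgz, mul_zero]
      have hz0 : z = 0 := by rw [← hc₂, hgz, mul_zero]
      have hw1 : w = 1 := by rw [hx0] at htr; linear_combination htr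
      refine Or.inr (Or.inr ⟨y, 1, 0, 1, ?_, by ring⟩)
      rw [hEeta, hx0, hz0, hw1]
      congr 1 <;> norm_num
    · have hsum : α * c₁ + β * c₂ = 1 := by
        have h0 : g * (α * c₁ + β * c₂) = g * 1 := by
          linear_combination α * hc₁ + β * hc₂ + hab
        exact mul_left_cancel₀ hgz h0
      have hkey : c₁ * w = c₂ * y := by
        have h0 : g * (c₁ * w - c₂ * y) = 0 := by
          linear_combination w * hc₁ - y * hc₂ - hdet
        rcases mul_eq_zero.mp h0 with h | h
        · exact absurd h hgz
        · linear_combination h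
      have h12 : y = c₁ * (α * y + β * w) := by
        linear_combination (-y) * hsum - β * hkey
      have h22 : w = c₂ * (α * y + β * w) := by
        linear_combination (-w) * hsum + α * hkey
      refine Or.inr (Or.inr ⟨c₁, c₂, g, α * y + β * w, ?_, ?_⟩)
      · have htarget : (!![x, y; z, w] : Matrix (Fin 2) (Fin 2) R) =
            !![c₁ * g, c₁ * (α * y + β * w); c₂ * g, c₂ * (α * y + β * w)] := by
          have hx' : x = c₁ * g := hc₁.symm
          have hz' : z = c₂ * g := hc₂.symm
          ext i j
          fin_cases i <;> fin_cases j <;>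
            simpa using by first
              | exact hx'
              | exact hz'
              | exact h12
              | exact h22
        exact hEeta.trans htarget
      · calc g * c₁ + (α * y + β * w) * c₂ = c₁ * g + c₂ * (α * y + β * w) := by ring
          _ = x + w := by rw [hc₁, ← h22]
          _ = 1 := htr

lemma rank1_mul (k₁ k₂ w₁ w₂ c₁ c₂ d₁ d₂ : R) :
    (!![k₁*w₁, k₁*w₂; k₂*w₁, k₂*w₂] : Matrix (Fin 2) (Fin 2) R) *
      !![c₁*d₁, c₁*d₂; c₂*d₁, c₂*d₂]
    = !![(k₁*(w₁*c₁+w₂*c₂))*d₁, (k₁*(w₁*c₁+w₂*c₂))*d₂;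
         (k₂*(w₁*c₁+w₂*c₂))*d₁, (k₂*(w₁*c₁+w₂*c₂))*d₂] := by
  ext i j
  fin_cases i <;> fin_cases j <;>
    (simp [Matrix.mul_apply, Fin.sum_univ_two]; ring)

lemma prod_structure (l : List (Matrix (Fin 2) (Fin 2) R))
    (hid : ∀ E ∈ l, E * E = E) :
    l.prod = 1 ∨ ∃ k₁ k₂ w₁ w₂ c₁ c₂ : R,
      l.prod = !![k₁*w₁, k₁*w₂; k₂*w₁, k₂*w₂] ∧ w₁*c₁ + w₂*c₂ = 1 := by
  induction l using List.reverseRecOn with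
  | nil => left; simp
  | append_singleton t E ih =>
      have hidt : ∀ F ∈ t, F * F = F := fun F hF => hid F (by simp [hF])
      have hE : E * E = E := hid E (by simp)
      have hprod : (t ++ [E]).prod = t.prod * E := by simp
      rcases idem_split E hE with h0 | h1 | ⟨c₁, c₂, d₁, d₂, hEeq, hdc⟩
      · right
        refine ⟨0, 0, 0, 1, 0, 1, ?_, by ring⟩
        rw [hprod, h0, mul_zero]
        ext i j; fin_cases i <;> fin_cases j <;> simp
      · rw [hprod, h1, mul_one]
        exact ih hidt
      · rcases ih hidt with ht1 | ⟨k₁, k₂, w₁, w₂, e₁, e₂, hteq, hwc⟩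
        · right
          refine ⟨c₁, c₂, d₁, d₂, c₁, c₂, ?_, hdc⟩
          rw [hprod, ht1, one_mul, hEeq]
        · right
          refine ⟨k₁*(w₁*c₁+w₂*c₂), k₂*(w₁*c₁+w₂*c₂), d₁, d₂, c₁, c₂, ?_, hdc⟩
          rw [hprod, hteq, hEeq, rank1_mul]

end Bezout


lemma Sm_entry00 (a b : R) : Sm a b 0 0 = a := by simp [Sm]
lemma Sm_entry01 (a b : R) : Sm a b 0 1 = b := by simp [Sm]
lemma Sm_entry10 (a b : R) : Sm a b 1 0 = 0 := by simp [Sm]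
lemma Sm_entry11 (a b : R) : Sm a b 1 1 = 0 := by simp [Sm]

lemma Sm_inj {a b a' b' : R} (h : Sm a b = Sm a' b') : a = a' ∧ b = b' := by
  constructor
  · have := congrFun (congrFun h 0) 0; simpa [Sm] using this
  · have := congrFun (congrFun h 0) 1; simpa [Sm] using this

/-- The representation of `(1, e)` by a one-letter word. -/
lemma rep_single (e : R) : ![(1 : R), e] = Matrix.vecMul ![1, 0] (Pw [-e] * Jm) := by
  have h1 : (Pw [-e] : Matrix (Fin 2) (Fin 2) R) = Mw (-e) := by
    simp [Pw]
  rw [h1, ← Matrix.vecMul_vecMul, Mw_mul_row]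
  rw [vecMul_pair]
  apply eq_pair_iff.mpr
  constructor
  · simp [Jm]
  · simp [Jm]

lemma Mw_zero_sq : (Mw 0 : Matrix (Fin 2) (Fin 2) R) * Mw 0 = 1 := by
  ext i j
  fin_cases i <;> fin_cases j <;>
    simp [Mw, Matrix.mul_apply, Fin.sum_univ_two, Matrix.one_apply]

lemma rep_pad (w : List R) : (Pw (0 :: 0 :: w) : Matrix (Fin 2) (Fin 2) R) = Pw w := by
  rw [Pw_cons, Pw_cons, ← Matrix.mul_assoc, Mw_zero_sq, one_mul]

/-- `(1, e)` has representations of every odd length. -/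
lemma rep_one (m : ℕ) (e : R) :
    ∃ w : List R, w.length = 2 * m + 1 ∧ ![(1 : R), e] = Matrix.vecMul ![1, 0] (Pw w * Jm) := by
  induction m with
  | zero => exact ⟨[-e], by simp, rep_single e⟩
  | succ k ih =>
      obtain ⟨w, hlen, hrep⟩ := ih
      exact ⟨0 :: 0 :: w, by simp [hlen]; omega, by rw [rep_pad]; exact hrep⟩

/-- An idempotent `Sm a b` with unimodular row has `a = 1`. -/
lemma Sm_idem_a_eq_one [IsDomain R] {a b x y : R} (h : a * x + b * y = 1)
    (hid : Sm a b * Sm a b = Sm a b) : a = 1 := by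
  have hmul : Sm a b * Sm a b = Sm (a * a) (a * b) := by
    ext i j
    fin_cases i <;> fin_cases j <;>
      simp [Sm, Matrix.mul_apply, Fin.sum_univ_two]
  rw [hmul] at hid
  obtain ⟨ha, hb⟩ := Sm_inj hid
  have : a * (a - 1) = 0 := by linear_combination ha
  rcases mul_eq_zero.mp this with ha0 | ha1
  · exfalso
    have hb0 : b = 0 := by rw [ha0] at hb; linear_combination -hb
    rw [ha0, hb0] at h
    simp at h
  · linear_combination ha1

lemma Sm_one_idem (b : R) : Sm 1 b * Sm 1 b = Sm 1 b := by
  ext i j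
  fin_cases i <;> fin_cases j <;>
    simp [Sm, Matrix.mul_apply, Fin.sum_univ_two]

/-- Forward direction: a product of `n+1` idempotents with unimodular first row
is represented by a word of length `2n+1`. -/
lemma fwd [IsDomain R] [IsBezout R] :
    ∀ (n : ℕ) (a b x y : R), a * x + b * y = 1 →
    ∀ l : List (Matrix (Fin 2) (Fin 2) R), (∀ E ∈ l, E * E = E) → l.length = n + 1 →
    Sm a b = l.prod →
    ∃ w : List R, w.length = 2 * n + 1 ∧ ![a, b] = Matrix.vecMul ![1, 0] (Pw w * Jm) := by
  intro n
  induction n with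
  | zero =>
      intro a b x y hcm l hid hlen hprod
      match l, hlen with
      | [E], _ =>
        have hprod' : Sm a b = E := by simpa using hprod
        have hidem : Sm a b * Sm a b = Sm a b := by
          rw [hprod']; exact hid E (by simp)
        have ha1 : a = 1 := Sm_idem_a_eq_one hcm hidem
        subst ha1
        exact ⟨[-b], by simp, rep_single b⟩
  | succ n ih =>
      intro a b x y hcm l hid hlen hprod
      -- split off the last factor
      have hlne : l ≠ [] := by intro h; rw [h] at hlen; simp at hlen
      obtain ⟨t, E, rfl⟩ : ∃ t E, l = t ++ [E] :=
        ⟨l.dropLast, l.getLast hlne, by rw [List.dropLast_append_getLast hlne]⟩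
      have htlen : t.length = n + 1 := by
        have := hlen; simp at this; omega
      have hidt : ∀ F ∈ t, F * F = F := fun F hF => hid F (by simp [hF])
      have hidE : E * E = E := hid E (by simp)
      have hprodte : Sm a b = t.prod * E := by
        rw [hprod]; simp
      rcases idem_split E hidE with h0 | h1 | ⟨c₁, c₂, d₁, d₂, hEeq, hdc⟩
      · -- E = 0 : contradiction
        exfalso
        rw [h0, mul_zero] at hprodte
        have ha : a = 0 := by
          have := congrFun (congrFun hprodte 0) 0; simpa [Sm] using this
        have hb : b = 0 := by
          have := congrFun (congrFun hprodte 0) 1; simpa [Sm] using this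
        rw [ha, hb] at hcm; simp at hcm
      · -- E = 1 : pad
        rw [h1, mul_one] at hprodte
        obtain ⟨w, hwlen, hwrep⟩ := ih a b x y hcm t hidt htlen hprodte
        refine ⟨0 :: 0 :: w, by simp [hwlen]; omega, ?_⟩
        rw [rep_pad]; exact hwrep
      · rcases prod_structure t hidt with ht1 | ⟨k₁, k₂, w₁, w₂, e₁, e₂, hteq, hwc⟩
        · -- t.prod = 1 : S a b itself idempotent
          rw [ht1, one_mul] at hprodte
          have hidem : Sm a b * Sm a b = Sm a b := by
            rw [hprodte]; exact hidE
          have ha1 : a = 1 := Sm_idem_a_eq_one hcm hidem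
          subst ha1
          exact rep_one (n + 1) b
        · -- main case
          rw [hteq, hEeq, rank1_mul] at hprodte
          set t' : R := w₁ * c₁ + w₂ * c₂ with ht'
          have ha : a = k₁ * t' * d₁ := by
            have := congrFun (congrFun hprodte 0) 0; simpa [Sm] using this
          have hb : b = k₁ * t' * d₂ := by
            have := congrFun (congrFun hprodte 0) 1; simpa [Sm] using this
          have hz1 : 0 = k₂ * t' * d₁ := by
            have := congrFun (congrFun hprodte 1) 0; simpa [Sm] using this
          have hz2 : 0 = k₂ * t' * d₂ := by
            have := congrFun (congrFun hprodte 1) 1; simpa [Sm] using this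
          set e : R := d₁ * x + d₂ * y with he
          have hk1e : k₁ * (t' * e) = 1 := by
            rw [he]; rw [ha, hb] at hcm; linear_combination hcm
          have hk2e : k₂ * (t' * e) = 0 := by
            rw [he]; linear_combination (-x) * hz1 + (-y) * hz2
          have hk20 : k₂ = 0 := by
            rcases mul_eq_zero.mp hk2e with h | h
            · exact h
            · exfalso; rw [h, mul_zero] at hk1e; exact one_ne_zero hk1e.symm
          have htSm : t.prod = Sm (k₁ * w₁) (k₁ * w₂) := by
            rw [hteq, hk20]
            ext i j; fin_cases i <;> fin_cases j <;> simp [Sm]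
          -- unimodularity of (a', b')
          have h1 : (k₁ * w₁) * (c₁ * e) + (k₁ * w₂) * (c₂ * e) = 1 := by
            rw [ht'] at hk1e; linear_combination hk1e
          obtain ⟨w, hwlen, hwrep⟩ :=
            ih (k₁ * w₁) (k₁ * w₂) (c₁ * e) (c₂ * e) h1 t hidt htlen htSm.symm
          have h2 : a * (c₁ * e) + b * (c₂ * e) = 1 := by
            rw [ha, hb, ht']
            rw [ht'] at hk1e
            linear_combination (d₁ * c₁ + d₂ * c₂) * hk1e + hdc
          obtain ⟨x', y', hxy⟩ := extend_word a b (k₁ * w₁) (k₁ * w₂) (c₁ * e) (c₂ * e) w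
            hwrep h1 h2
          exact ⟨x' :: y' :: w, by simp [hwlen]; omega, hxy⟩

/-- Backward direction. -/
lemma bwd : ∀ (n : ℕ) (a b : R) (w : List R), w.length = 2 * n + 1 →
    ![a, b] = Matrix.vecMul ![1, 0] (Pw w * Jm) →
    ∃ l : List (Matrix (Fin 2) (Fin 2) R),
      (∀ E ∈ l, E * E = E) ∧ l.length = n + 1 ∧ Sm a b = l.prod := by
  intro n
  induction n with
  | zero =>
      intro a b w hwlen hrep
      match w, hwlen with
      | [q], _ =>
        have hq : ![(1 : R), -q] = Matrix.vecMul ![1, 0] (Pw [q] * Jm) := by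
          have := rep_single (R := R) (-q)
          rwa [neg_neg] at this
        have : (![a, b] : Fin 2 → R) = ![1, -q] := by rw [hrep, hq]
        have ha : a = 1 := (eq_pair_iff.mp this).1
        have hb : b = -q := (eq_pair_iff.mp this).2
        subst ha
        refine ⟨[Sm 1 b], ?_, by simp, by simp⟩
        intro E hE
        rw [List.mem_singleton.mp hE]
        exact Sm_one_idem b
  | succ n ih =>
      intro a b w hwlen hrep
      match w, hwlen with
      | x :: y :: w'', hwl =>
        have hw2 : w''.length = 2 * n + 1 := by simp at hwl; omega
        set U : Matrix (Fin 2) (Fin 2) R := Pw w'' * Jm with hU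
        set a' : R := U 0 0 with ha'
        set b' : R := U 0 1 with hb'
        have hl' : ![a', b'] = Matrix.vecMul ![1, 0] (Pw w'' * Jm) := by
          rw [← hU, vecMul_e0]
        obtain ⟨l', hidl', hlenl', hprodl'⟩ := ih a' b' w'' hw2 hl'
        obtain ⟨u, hu⟩ := isUnit_PwJ (R := R) w''
        have hUV : (Pw w'' * Jm) * (↑u⁻¹ : Matrix (Fin 2) (Fin 2) R) = 1 := by
          rw [← hu]; exact u.mul_inv
        set C : Fin 2 → R := (↑u⁻¹ : Matrix (Fin 2) (Fin 2) R) *ᵥ ![1, -y] with hC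
        set c : R := C 0 with hc
        set d : R := C 1 with hd
        have hCcd : C = ![c, d] := eq_pair_iff.mpr ⟨rfl, rfl⟩
        -- h1 : a'*c + b'*d = 1
        have h1 : a' * c + b' * d = 1 := by
          have e1 : dotProduct ![a', b'] C = 1 := by
            rw [hC, dotProduct_mulVec]
            have hvm : Matrix.vecMul ![a', b'] (↑u⁻¹ : Matrix (Fin 2) (Fin 2) R)
                = Matrix.vecMul ![1, 0] (1 : Matrix (Fin 2) (Fin 2) R) := by
              rw [hl', Matrix.vecMul_vecMul, hUV]
            rw [hvm, Matrix.vecMul_one, dot_pair]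
            ring
          rw [hCcd, dot_pair] at e1; exact e1
        -- h2 : a*c + b*d = 1
        have hxyU : ![a, b] = Matrix.vecMul ![1, 0] (Mw x * (Mw y * U)) := by
          rw [hrep, hU, Pw_cons, Pw_cons, Matrix.mul_assoc, Matrix.mul_assoc]
        have h2 : a * c + b * d = 1 := by
          have e1 : dotProduct ![a, b] C = 1 := by
            rw [hC, dotProduct_mulVec]
            have hvm : Matrix.vecMul ![a, b] (↑u⁻¹ : Matrix (Fin 2) (Fin 2) R)
                = ![x * y + 1, x] := by
              rw [hxyU, Matrix.vecMul_vecMul]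
              have hcol : Mw x * (Mw y * U) * (↑u⁻¹ : Matrix (Fin 2) (Fin 2) R)
                  = Mw x * Mw y := by
                rw [Matrix.mul_assoc (Mw x), Matrix.mul_assoc (Mw y), hU, hUV, mul_one]
              rw [hcol, ← Matrix.vecMul_vecMul, Mw_mul_row, Mw_mul_row]
              apply eq_pair_iff.mpr
              constructor
              · show (1 * x + 0) * y + 1 = x * y + 1
                ring
              · show 1 * x + 0 = x
                ring
            rw [hvm, dot_pair]
            ring
          rw [hCcd, dot_pair] at e1; exact e1
        -- the idempotent E
        set E : Matrix (Fin 2) (Fin 2) R := !![c * a, c * b; d * a, d * b] with hE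
        have hEidem : E * E = E := by
          rw [hE]
          ext i j
          fin_cases i <;> fin_cases j <;>
            (simp [Matrix.mul_apply, Fin.sum_univ_two];
             try (first
               | linear_combination (c * a) * h2
               | linear_combination (c * b) * h2
               | linear_combination (d * a) * h2
               | linear_combination (d * b) * h2))
        have hSE : Sm a b = Sm a' b' * E := by
          rw [hE]
          ext i j
          fin_cases i <;> fin_cases j <;>
            (simp [Sm, Matrix.mul_apply, Fin.sum_univ_two];
             try (first
               | linear_combination (-a) * h1
               | linear_combination (-b) * h1))
        refine ⟨l' ++ [E], ?_, by simp [hlenl'], ?_⟩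
        · intro F hF
          rcases List.mem_append.mp hF with h | h
          · exact hidl' F h
          · rw [List.mem_singleton.mp h]; exact hEidem
        · rw [List.prod_append, List.prod_singleton, ← hprodl', ← hSE]

end IdemCF

/-- Over a commutative Bézout domain, for `a, b` with `a·R + b·R = R` and `n > 0`,
the matrix `!![a, b; 0, 0]` is a product of `n` idempotent matrices if and only
if `(a, b) = (1, 0) · M(r_{2n-2}) ⋯ M(r₀) · J` for some `r₀, …, r_{2n-2} ∈ R`,
where `M(r) = !![r, 1; 1, 0]` and `J = !![0, -1; 1, 0]`. -/
theorem prod_n_idempotents_iff_continued_fraction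
    (R : Type*) [CommRing R] [IsDomain R] [IsBezout R] (a b : R)
    (hcomax : ∃ x y : R, a * x + b * y = 1) (n : ℕ) (hn : 0 < n) :
    (∃ E : Fin n → Matrix (Fin 2) (Fin 2) R,
      (∀ i, E i * E i = E i) ∧
        (!![a, b; 0, 0] : Matrix (Fin 2) (Fin 2) R) = (List.ofFn E).prod) ↔
    (∃ r : ℕ → R,
      ![a, b] = Matrix.vecMul ![1, 0]
        ((((List.range (2 * n - 1)).map
          (fun k => (!![r (2 * n - 2 - k), 1; 1, 0] : Matrix (Fin 2) (Fin 2) R))).prod) *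
            !![0, -1; 1, 0])) := by
  obtain ⟨x, y, hxy⟩ := hcomax
  obtain ⟨m, rfl⟩ : ∃ m, n = m + 1 := ⟨n - 1, by omega⟩
  constructor
  · rintro ⟨E, hidem, hprod⟩
    have hlist : ∀ F ∈ List.ofFn E, F * F = F := by
      intro F hF
      obtain ⟨i, rfl⟩ := List.mem_ofFn.mp hF
      exact hidem i
    obtain ⟨w, hwlen, hwrep⟩ :=
      IdemCF.fwd m a b x y hxy (List.ofFn E) hlist (by simp) hprod
    refine ⟨fun k => w.getD (2 * (m + 1) - 2 - k) 0, ?_⟩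
    have hmaps : (List.range (2 * (m + 1) - 1)).map
        (fun k => (!![(fun k => w.getD (2 * (m + 1) - 2 - k) 0) (2 * (m + 1) - 2 - k), 1; 1, 0]
          : Matrix (Fin 2) (Fin 2) R)) = w.map IdemCF.Mw := by
      apply List.ext_getElem
      · simp [hwlen]; omega
      · intro k h1 h2
        have hk : k < 2 * (m + 1) - 1 := by simpa using h1
        have hkk : 2 * (m + 1) - 2 - (2 * (m + 1) - 2 - k) = k := by omega
        have hkw : k < w.length := by omega
        simp only [List.getElem_map, List.getElem_range, hkk]
        rw [List.getD_eq_getElem w 0 hkw]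
        rfl
    rw [hmaps]
    exact hwrep
  · rintro ⟨r, hrep⟩
    set w : List R := (List.range (2 * (m + 1) - 1)).map (fun k => r (2 * (m + 1) - 2 - k))
      with hw
    have hwlen : w.length = 2 * m + 1 := by simp [hw]; omega
    have hmaps : w.map IdemCF.Mw = (List.range (2 * (m + 1) - 1)).map
        (fun k => (!![r (2 * (m + 1) - 2 - k), 1; 1, 0] : Matrix (Fin 2) (Fin 2) R)) := by
      rw [hw, List.map_map]
      rfl
    obtain ⟨l, hidl, hlenl, hprodl⟩ := IdemCF.bwd m a b w hwlen
      (by rw [show (IdemCF.Pw w : Matrix (Fin 2) (Fin 2) R) = (w.map IdemCF.Mw).prod from rfl, hmaps]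
          exact hrep)
    refine ⟨fun i => l.get (Fin.cast hlenl.symm i), fun i => ?_, ?_⟩
    · exact hidl _ (List.get_mem l _)
    · have hofn : List.ofFn (fun i : Fin (m + 1) => l.get (Fin.cast hlenl.symm i)) = l := by
        apply List.ext_getElem
        · simp [hlenl]
        · intro k h1 h2
          rw [List.getElem_ofFn]
          rfl
      rw [hofn]
      exact hprodl
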